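/- The 1-Lipschitz saturation is contained in the 2-Lipschitz saturation: M_{S_1} ⊆ M_{S_2}. -/
import Mathlib


/-- The double of `h ∈ R^p` along the two "pullback" homomorphisms `φ1, φ2 : R →+* S`. -/
def Lip.double {R S : Type*} [CommRing R] [CommRing S] {p : ℕ}
    (φ1 φ2 : R →+* S) (h : Fin p → R) : Fin p ⊕ Fin p → S :=
  Sum.elim (fun i => φ1 (h i)) (fun i => φ2 (h i))

/-- Integral closure of a submodule `N ⊆ A^ι` by the curve criterion. -/
def Lip.curveCl {A : Type*} [CommRing A] {ι : Type*} (N : Submodule A (ι → A)) :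
    Set (ι → A) :=
  {h | ∀ φ : A →+* PowerSeries ℂ,
    (fun i => φ (h i)) ∈
      Submodule.span (PowerSeries ℂ) ((fun m : ι → A => fun i => φ (m i)) '' (N : Set (ι → A)))}

/-- The double of an element of `R` (the `p = 1` case). -/
def Lip.idDouble {R S : Type*} [CommRing R] [CommRing S] (φ1 φ2 : R →+* S) (a : R) :
    Fin 2 → S := ![φ1 a, φ2 a]

/-- The double of an ideal `I ⊆ R`. -/
def Lip.idealDouble {R S : Type*} [CommRing R] [CommRing S] (φ1 φ2 : R →+* S)
    (I : Ideal R) : Submodule S (Fin 2 → S) :=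
  Submodule.span S (Lip.idDouble φ1 φ2 '' (I : Set R))

/-- The Lipschitz saturation of an ideal `I ⊆ R`, via Gaffney's characterization
`a ∈ I_S ↔ a_D ∈ closure (I_D)`. -/
def Lip.sat {R S : Type*} [CommRing R] [CommRing S] (φ1 φ2 : R →+* S) (I : Ideal R) :
    Set R :=
  {a | Lip.idDouble φ1 φ2 a ∈ Lip.curveCl (Lip.idealDouble φ1 φ2 I)}


private lemma Lip.image_mem_span {S P : Type*} [CommRing S] [CommRing P] {ι : Type*}
    (χ : S →+* P) (T : Set (ι → S)) {m : ι → S} (hm : m ∈ Submodule.span S T) :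
    (fun i => χ (m i)) ∈ Submodule.span P ((fun m : ι → S => fun i => χ (m i)) '' T) := by
  induction hm using Submodule.span_induction with
  | mem x hx => exact Submodule.subset_span ⟨x, hx, rfl⟩
  | zero =>
      have e : (fun i => χ ((0 : ι → S) i)) = (0 : ι → P) := by funext i; simp
      rw [e]; exact Submodule.zero_mem _
  | add x y hx hy ihx ihy =>
      have e : (fun i => χ ((x + y) i)) = (fun i => χ (x i)) + (fun i => χ (y i)) := by
        funext i; simp
      rw [e]; exact Submodule.add_mem _ ihx ihy
  | smul s x hx ih =>
      have e : (fun i => χ ((s • x) i)) = χ s • (fun i => χ (x i)) := by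
        funext i; simp [smul_eq_mul]
      rw [e]; exact Submodule.smul_mem _ _ ih


private lemma Lip.key_calc {P : Type*} [CommRing P] {p n : ℕ} (a e : Fin p → P)
    (f : Fin n → P) (c : Fin n → Fin p → P) (he : ∀ k, e k = ∑ i, f i * c i k) :
    ∑ k, a k * e k = ∑ i, f i * ∑ k, a k * c i k := by
  simp only [he, Finset.mul_sum]
  rw [Finset.sum_comm]
  exact Finset.sum_congr rfl fun i _ => Finset.sum_congr rfl fun k _ => by ring

/-- `M_{S₁} ⊆ M_{S₂}`: if `h_D ∈ closure (M_D)` then for every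
`ψ : X → Hom(ℂ^p, ℂ)` (modeled by `ψ : Fin p → R`), `ψ·h` lies in the Lipschitz
saturation of the ideal `ψ·M`. -/
theorem satOne_le_satTwo {R S : Type*} [CommRing R] [CommRing S] {p : ℕ}
    (φ1 φ2 : R →+* S) (M : Submodule R (Fin p → R)) (h : Fin p → R)
    (hh : Lip.double φ1 φ2 h ∈ Lip.curveCl (Submodule.span S (Lip.double φ1 φ2 '' M))) :
    ∀ ψ : Fin p → R,
      (∑ i, ψ i * h i) ∈
        Lip.sat φ1 φ2 (Ideal.span {x : R | ∃ m ∈ M, x = ∑ i, ψ i * m i}) := by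

  intro ψ
  simp only [Lip.sat, Lip.curveCl, Set.mem_setOf_eq]
  intro χ
  have key := hh χ
  have key2 : (fun i => χ (Lip.double φ1 φ2 h i)) ∈
      Submodule.span (PowerSeries ℂ)
        ((fun m : (Fin p ⊕ Fin p) → S => fun i => χ (m i)) ''
          (Lip.double φ1 φ2 '' (M : Set (Fin p → R)))) := by
    refine Submodule.span_le.2 ?_ key
    rintro _ ⟨x, hx, rfl⟩
    exact Lip.image_mem_span χ _ hx
  rw [Set.image_image] at key2
  obtain ⟨n, f, g, hg⟩ := Submodule.mem_span_set'.1 key2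
  choose m hmM hmg using fun i => (g i).2
  simp only [← hmg] at hg
  have h1 : ∀ k, χ (φ1 (h k)) = ∑ i, f i * χ (φ1 (m i k)) := by
    intro k
    have := congrFun hg (Sum.inl k)
    simpa [Lip.double, Finset.sum_apply, smul_eq_mul] using this.symm
  have h2 : ∀ k, χ (φ2 (h k)) = ∑ i, f i * χ (φ2 (m i k)) := by
    intro k
    have := congrFun hg (Sum.inr k)
    simpa [Lip.double, Finset.sum_apply, smul_eq_mul] using this.symm
  have main : (fun j => χ (Lip.idDouble φ1 φ2 (∑ k, ψ k * h k) j))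
      = ∑ i, f i • (fun j => χ (Lip.idDouble φ1 φ2 (∑ k, ψ k * m i k) j)) := by
    funext j
    rw [Finset.sum_apply]
    simp only [Lip.idDouble, Pi.smul_apply, smul_eq_mul]
    fin_cases j <;>
      simp only [Fin.zero_eta, Fin.mk_one, Matrix.cons_val_zero, Matrix.cons_val_one,
        Matrix.head_cons, map_sum, map_mul]
    · exact Lip.key_calc _ _ f _ h1
    · exact Lip.key_calc _ _ f _ h2
  rw [main]
  refine Submodule.sum_mem _ fun i _ => Submodule.smul_mem _ _ ?_
  refine Submodule.subset_span ⟨Lip.idDouble φ1 φ2 (∑ k, ψ k * m i k), ?_, rfl⟩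
  refine Submodule.subset_span ⟨∑ k, ψ k * m i k, ?_, rfl⟩
  exact Ideal.subset_span ⟨m i, hmM i, rfl⟩
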